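/- Outer approximation of the graphical derivative. Let P and Y be normed vector spaces, X a Banach space, P×X with the max-norm, C ⊆ Y a closed convex cone, F: P×X ⇉ Y with nonempty values, and (p̄,x̄) ∈ P×X with x̄ ∈ Solv(p̄). Suppose that F admits an inner prederivative H_F((p̄,x̄);·): P×X ⇉ Y at (p̄,x̄) which, as a set-valued mapping of (q,w), is l.s.c. on P×X. Then for every p ∈ P, DSolv(p̄,x̄)(p) ⊆ ⋂_{y ∈ F(p̄,x̄)} {v ∈ X : H_F((p̄,x̄);(p,v)) ⊆ T_C(y)}, where T_C(y) = cl[cone(C − y)] is the contingent cone to the convex set C at y. -/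

import Mathlib

open Classical Metric Filter Set
open scoped ENNReal Topology Pointwise

/-- A set-valued mapping `Φ` is l.s.c. at `w0`. -/
def SVLscAt {X Y : Type*} [PseudoMetricSpace X] [TopologicalSpace Y]
    (Φ : X → Set Y) (x0 : X) : Prop :=
  ∀ V : Set Y, IsOpen V → (Φ x0 ∩ V).Nonempty →
    ∃ δ > (0:ℝ), ∀ x ∈ closedBall x0 δ, (Φ x ∩ V).Nonempty

/-- `H` is a (positively homogeneous) inner prederivative of `Φ` at `w0`. -/
def IsInnerPrederivAt {E Y : Type*} [NormedAddCommGroup E] [NormedSpace ℝ E]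
    [NormedAddCommGroup Y] [NormedSpace ℝ Y]
    (Φ : E → Set Y) (H : E → Set Y) (w0 : E) : Prop :=
  (∀ t : ℝ, 0 < t → ∀ u : E, H (t • u) = t • H u) ∧
  ∀ ε > (0:ℝ), ∃ δ > (0:ℝ), ∀ w ∈ closedBall w0 δ,
    Φ w0 + H (w - w0) ⊆ Φ w + (ε * ‖w - w0‖) • closedBall (0:Y) 1

/-- Contingent (Bouligand tangent) cone to `S` at `w`. -/
def contingentCone {E : Type*} [SeminormedAddCommGroup E] [NormedSpace ℝ E]
    (S : Set E) (w : E) : Set E :=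
  {v | ∃ (t : ℕ → ℝ) (vn : ℕ → E), (∀ n, 0 < t n) ∧ Tendsto t atTop (𝓝 0) ∧
    Tendsto vn atTop (𝓝 v) ∧ ∀ n, w + t n • vn n ∈ S}

/-- **Outer approximation of the graphical derivative of the solution mapping.**
For the convex set `C`, `T_C(y) = cl[cone(C − y)]`. `P × X` carries the max-norm
(the product norm). -/
theorem outer_approximation_of_graphical_derivative
    {P X Y : Type*} [NormedAddCommGroup P] [NormedSpace ℝ P]
    [NormedAddCommGroup X] [NormedSpace ℝ X] [CompleteSpace X]
    [NormedAddCommGroup Y] [NormedSpace ℝ Y]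
    (C : Set Y) (hCclosed : IsClosed C) (hCconv : Convex ℝ C)
    (hCcone : ∀ t : ℝ, 0 < t → ∀ y ∈ C, t • y ∈ C)
    (F : P → X → Set Y) (hFne : ∀ p x, (F p x).Nonempty)
    (pbar : P) (xbar : X)
    (hsol : F pbar xbar ⊆ C)
    (HF : P × X → Set Y)
    (hHF : IsInnerPrederivAt (fun q : P × X => F q.1 q.2) HF (pbar, xbar))
    (hHFlsc : ∀ w : P × X, SVLscAt HF w) :
    ∀ p : P,
      {v : X | ((p, v) : P × X) ∈ contingentCone {q : P × X | F q.1 q.2 ⊆ C} (pbar, xbar)} ⊆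
      ⋂ y ∈ F pbar xbar,
        {v : X | HF (p, v) ⊆ closure {w : Y | ∃ t : ℝ, 0 < t ∧ ∃ c ∈ C, w = t • (c - y)}} := by
  intro p v hv
  obtain ⟨t, vn, htpos, ht0, hvn, hmem⟩ := hv
  simp only [Set.mem_iInter, Set.mem_setOf_eq]
  intro y hy u hu
  rw [Metric.mem_closure_iff]
  intro ε' hε'
  set M : ℝ := ‖((p, v) : P × X)‖ + 1 with hMdef
  have hMpos : 0 < M := by positivity
  set ε : ℝ := ε' / (2 * (1 + M)) with hεdef
  have hεpos : 0 < ε := by positivity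
  obtain ⟨δ, hδpos, hδ⟩ := hHF.2 ε hεpos
  obtain ⟨δ'', hδ''pos, hlsc⟩ := hHFlsc (p, v) (ball u ε) isOpen_ball
    ⟨u, hu, mem_ball_self hεpos⟩
  have h1 : ∀ᶠ n in atTop, vn n ∈ closedBall ((p, v) : P × X) δ'' :=
    hvn (closedBall_mem_nhds _ hδ''pos)
  have h2 : ∀ᶠ n in atTop, ‖vn n‖ ≤ M := by
    filter_upwards [hvn.norm.eventually_lt_const (show ‖((p,v) : P × X)‖ < M by simp [hMdef])]
      with n hn using hn.le
  have h3 : ∀ᶠ n in atTop, t n * M ≤ δ := by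
    filter_upwards [ht0.eventually_lt_const (show (0:ℝ) < δ / M by positivity)] with n hn
    rw [lt_div_iff₀ hMpos] at hn
    exact hn.le
  obtain ⟨n, ⟨hn1, hn2⟩, hn3⟩ := ((h1.and h2).and h3).exists
  obtain ⟨un, hun, hunb⟩ := hlsc (vn n) hn1
  have htn : (0:ℝ) < t n := htpos n
  have hnorm : ‖t n • vn n‖ = t n * ‖vn n‖ := by
    rw [norm_smul, Real.norm_eq_abs, abs_of_pos htn]
  have hw : ((pbar, xbar) + t n • vn n) ∈ closedBall ((pbar, xbar) : P × X) δ := by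
    rw [mem_closedBall, dist_eq_norm, add_sub_cancel_left, hnorm]
    calc t n * ‖vn n‖ ≤ t n * M := by nlinarith
      _ ≤ δ := hn3
  have hsub : ((pbar, xbar) + t n • vn n) - (pbar, xbar) = t n • vn n := add_sub_cancel_left _ _
  have hkey : y + t n • un ∈
      (fun q : P × X => F q.1 q.2) ((pbar, xbar) + t n • vn n) +
        (ε * ‖((pbar, xbar) + t n • vn n) - (pbar, xbar)‖) • closedBall (0:Y) 1 := by
    apply hδ _ hw
    refine Set.add_mem_add hy ?_
    rw [hsub, hHF.1 (t n) htn]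
    exact Set.smul_mem_smul_set hun
  obtain ⟨z, hz, b', hb', hsum⟩ := hkey
  have hzC : z ∈ C := hmem n hz
  have hbnorm : ‖b'‖ ≤ ε * (t n * ‖vn n‖) := by
    obtain ⟨b, hb, rfl⟩ := hb'
    rw [mem_closedBall_zero_iff] at hb
    rw [norm_smul, hsub, hnorm, Real.norm_eq_abs]
    have h0 : (0:ℝ) ≤ ε * (t n * ‖vn n‖) := by positivity
    calc |ε * (t n * ‖vn n‖)| * ‖b‖ ≤ |ε * (t n * ‖vn n‖)| * 1 := by
          apply mul_le_mul_of_nonneg_left hb (abs_nonneg _)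
      _ = ε * (t n * ‖vn n‖) := by rw [mul_one, abs_of_nonneg h0]
  refine ⟨(t n)⁻¹ • (z - y), ⟨(t n)⁻¹, by positivity, z, hzC, rfl⟩, ?_⟩
  have hdiff : t n • (un - (t n)⁻¹ • (z - y)) = b' := by
    rw [smul_sub, smul_inv_smul₀ htn.ne']
    have : t n • un = z + b' - y := by
      rw [eq_sub_iff_add_eq, add_comm]
      exact hsum.symm
    rw [this]; abel
  have hun_s : ‖un - (t n)⁻¹ • (z - y)‖ ≤ ε * ‖vn n‖ := by
    have h1' : t n * ‖un - (t n)⁻¹ • (z - y)‖ = ‖b'‖ := by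
      rw [← hdiff, norm_smul, Real.norm_eq_abs, abs_of_pos htn]
    nlinarith [norm_nonneg (un - (t n)⁻¹ • (z - y))]
  have hdu : dist u un < ε := by
    rw [dist_comm]; exact mem_ball.mp hunb
  calc dist u ((t n)⁻¹ • (z - y)) ≤ dist u un + dist un ((t n)⁻¹ • (z - y)) := dist_triangle _ _ _
    _ < ε + ε * M := by
        simp only [dist_eq_norm] at hdu ⊢
        have : ε * ‖vn n‖ ≤ ε * M := by nlinarith
        nlinarith [hun_s]
    _ = ε' / 2 := by rw [hεdef]; field_simp
    _ < ε' := by linarith
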